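/- arXiv:1811.03591 — 2 statements merged into one kernel-verified Lean document; each statement's English description precedes it below -/
import Mathlib

section
/- There exists a constant c > 0 such that for every sufficiently small ε > 0 the following holds: there exist a three-point set X ⊂ ℝ and a map f : X → ℝ with distortion at most 1 + ε such that for every m ≥ 1, every outer extension f' : ℝ → ℝ^m of f has distortion at least 1 + c/log²(1/ε). (One can take X = {−ε', 0, 1} and f(−ε') = ε', f(0) = 0, f(1) = 1 for a suitable ε' proportional to ε.) -/
/-- `f` restricted to `A ⊆ ℝ` (mapping into `ℝᵐ`) has distortion at most `D`. -/
def HasDistortionAtMost {m : ℕ} (A : Set ℝ) (f : ℝ → EuclideanSpace ℝ (Fin m)) (D : ℝ) : Prop :=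
  ∃ lam > (0 : ℝ), ∀ x ∈ A, ∀ y ∈ A,
    lam * |x - y| ≤ ‖f x - f y‖ ∧ ‖f x - f y‖ ≤ lam * D * |x - y|

/-- `f : A → ℝ` has distortion at most `D`. -/
def HasDistortionAtMost₁ (A : Set ℝ) (f : ℝ → ℝ) (D : ℝ) : Prop :=
  ∃ lam > (0 : ℝ), ∀ x ∈ A, ∀ y ∈ A,
    lam * |x - y| ≤ |f x - f y| ∧ |f x - f y| ≤ lam * D * |x - y|

private lemma midpoint_aux {E : Type*} [NormedAddCommGroup E] [InnerProductSpace ℝ E]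
    (a b c : E) (μ D β s : ℝ) (hμ : 0 ≤ μ) (hβ0 : 0 ≤ β) (hs : 0 ≤ s)
    (hβsq : β^2 = D^2 - 1)
    (p1 : ‖a - c‖ ≤ μ * D * (s/2)) (p2 : ‖a - b‖ ≤ μ * D * (s/2))
    (p3 : μ * s ≤ ‖b - c‖) :
    ‖a - (1/2:ℝ) • (c + b)‖ ≤ μ * β * (s/2) := by
  have par := parallelogram_law_with_norm ℝ (a - c) (a - b)
  have hid1 : (a - c) + (a - b) = (2:ℝ) • (a - (1/2:ℝ) • (c + b)) := by module
  have hid2 : (a - c) - (a - b) = b - c := by abel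
  rw [hid1, hid2, norm_smul, show ‖(2:ℝ)‖ = 2 by norm_num] at par
  have hsq1 : ‖a - c‖^2 ≤ (μ * D * (s/2))^2 := pow_le_pow_left₀ (norm_nonneg _) p1 2
  have hsq2 : ‖a - b‖^2 ≤ (μ * D * (s/2))^2 := pow_le_pow_left₀ (norm_nonneg _) p2 2
  have hsq3 : (μ * s)^2 ≤ ‖b - c‖^2 := pow_le_pow_left₀ (by positivity) p3 2
  have hwsq : ‖a - (1/2:ℝ) • (c + b)‖^2 ≤ (μ * β * (s/2))^2 := by
    nlinarith [par, hsq1, hsq2, hsq3, hβsq]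
  nlinarith [hwsq, norm_nonneg (a - (1/2:ℝ) • (c + b)),
    mul_nonneg (mul_nonneg hμ hβ0) (by linarith : (0:ℝ) ≤ s/2)]

private lemma chain_aux {E : Type*} [NormedAddCommGroup E] [InnerProductSpace ℝ E]
    (g : ℝ → E) (v : E) (μ D β : ℝ) (hμ : 0 ≤ μ) (hβ0 : 0 ≤ β)
    (hβsq : β^2 = D^2 - 1) (hg0 : g 0 = 0) (hg1 : g 1 = v)
    (H1 : ∀ x y : ℝ, μ * |x - y| ≤ ‖g x - g y‖)
    (H2 : ∀ x y : ℝ, ‖g x - g y‖ ≤ μ * D * |x - y|) :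
    ∀ k : ℕ, ‖g ((1/2:ℝ)^k) - ((1/2:ℝ)^k) • v‖ ≤ (k:ℝ) * μ * β * (1/2:ℝ)^k := by
  intro k
  induction k with
  | zero => simp [hg1]
  | succ k ih =>
    have htpos : (0:ℝ) < (1/2:ℝ)^k := by positivity
    set t : ℝ := (1/2:ℝ)^k with ht
    have hpow : (1/2:ℝ)^(k+1) = t/2 := by rw [ht]; ring
    have p1 : ‖g (t/2) - g 0‖ ≤ μ * D * (t/2) := by
      have h := H2 (t/2) 0
      rwa [show |t/2 - 0| = t/2 from by
        rw [sub_zero]; exact abs_of_pos (by positivity)] at h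
    have p2 : ‖g (t/2) - g t‖ ≤ μ * D * (t/2) := by
      have h := H2 (t/2) t
      rwa [show |t/2 - t| = t/2 from by
        rw [abs_of_nonpos (by linarith)]; ring] at h
    have p3 : μ * t ≤ ‖g t - g 0‖ := by
      have h := H1 t 0
      rwa [show |t - 0| = t from by rw [sub_zero]; exact abs_of_pos htpos] at h
    have hmid := midpoint_aux (g (t/2)) (g t) (g 0) μ D β t hμ hβ0 htpos.le hβsq p1 p2 p3
    have hsplit : g (t/2) - (t/2) • v
        = (g (t/2) - (1/2:ℝ) • (g 0 + g t)) + (1/2:ℝ) • (g t - t • v) := by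
      rw [hg0]
      module
    rw [hpow, hsplit]
    calc ‖(g (t/2) - (1/2:ℝ) • (g 0 + g t)) + (1/2:ℝ) • (g t - t • v)‖
        ≤ ‖g (t/2) - (1/2:ℝ) • (g 0 + g t)‖ + ‖(1/2:ℝ) • (g t - t • v)‖ := norm_add_le _ _
      _ ≤ μ * β * (t/2) + (1/2) * ((k:ℝ) * μ * β * t) := by
          rw [norm_smul, show ‖(1/2:ℝ)‖ = 1/2 by norm_num]
          have := mul_le_mul_of_nonneg_left ih (by norm_num : (0:ℝ) ≤ 1/2)
          linarith [hmid]
      _ ≤ ((k:ℕ)+1 : ℝ) * μ * β * (t/2) := by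
          nlinarith [mul_nonneg (mul_nonneg hμ hβ0) htpos.le]
      _ = (((k+1:ℕ)):ℝ) * μ * β * (t/2) := by push_cast; ring
private lemma final_aux (Kr L D : ℝ) (hK1 : 1 ≤ Kr) (hK4L : Kr ≤ 4*L) (hL : 2 ≤ L)
    (hD1 : 1 ≤ D) (h : 4 ≤ Kr^2*(D^2-1)) : 1 + 1/16/L^2 ≤ D := by
  have hL2 : (0:ℝ) < L^2 := by positivity
  by_cases hD3 : D ≤ 3
  · have h1 : Kr^2 ≤ 16*L^2 := by nlinarith
    have h2 : Kr^2*(D^2-1) ≤ 16*L^2*(D^2-1) :=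
      mul_le_mul_of_nonneg_right h1 (by nlinarith)
    have h3 : D^2-1 ≤ 4*(D-1) := by nlinarith
    have h4 : 4 ≤ 64*(L^2*(D-1)) := by nlinarith [sq_nonneg L]
    have key : 1/16/L^2 ≤ D-1 := by rw [div_le_iff₀ hL2, mul_comm]; linarith
    linarith
  · have key : (1:ℝ)/16/L^2 ≤ 1 := by rw [div_le_iff₀ hL2]; nlinarith
    push_neg at hD3
    linarith

set_option maxHeartbeats 1000000 in
/-- There is a constant `c > 0` such that for every sufficiently small `ε > 0` there are a
three-point set `X ⊂ ℝ` and a map `f : X → ℝ` of distortion at most `1 + ε` such that every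
outer extension `f' : ℝ → ℝᵐ` of `f` has distortion at least `1 + c / log² (1/ε)`. -/
theorem lower_bound_outer_extension_of_line_map :
    ∃ c > (0 : ℝ), ∃ ε₀ > (0 : ℝ), ∀ ε : ℝ, 0 < ε → ε < ε₀ →
      ∃ (X : Set ℝ) (f : ℝ → ℝ), X.Finite ∧ X.ncard = 3 ∧
        HasDistortionAtMost₁ X f (1 + ε) ∧
        ∀ m : ℕ, 1 ≤ m → ∀ f' : ℝ → EuclideanSpace ℝ (Fin m),
          (∀ x ∈ X, ∀ j : Fin m, f' x j = if (j : ℕ) = 0 then f x else 0) →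
          ∀ D : ℝ, HasDistortionAtMost Set.univ f' D →
            1 + c / (Real.log (1 / ε)) ^ 2 ≤ D := by
  refine ⟨1/16, by norm_num, Real.exp (-2), Real.exp_pos _, ?_⟩
  intro ε hε hεlt
  set L := Real.log (1/ε) with hLdef
  have hL : 2 ≤ L := by
    have h1 : Real.log ε < -2 := by
      have := Real.log_lt_log hε hεlt
      rwa [Real.log_exp] at this
    have h2 : L = - Real.log ε := by rw [hLdef, one_div, Real.log_inv]
    linarith
  have hε2 : ε < 1/2 := by
    have h3 : (3:ℝ) ≤ Real.exp 2 := by nlinarith [Real.add_one_le_exp (2:ℝ)]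
    have h4 : Real.exp (-2) ≤ 1/3 := by
      rw [Real.exp_neg, inv_le_comm₀ (Real.exp_pos _) (by norm_num : (0:ℝ) < 1/3),
        one_div, inv_inv]
      linarith
    linarith
  -- the number of scales
  set K : ℕ := ⌈Real.logb 2 (4/ε)⌉₊ with hKdef
  have hlogbpos : 0 < Real.logb 2 (4/ε) := by
    apply Real.logb_pos (by norm_num)
    rw [lt_div_iff₀ hε]; linarith
  have hK1 : 1 ≤ K := Nat.one_le_ceil_iff.mpr hlogbpos
  have hKge : Real.logb 2 (4/ε) ≤ (K:ℝ) := Nat.le_ceil _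
  have hK4L : (K:ℝ) ≤ 4 * L := by
    have hceil : (K:ℝ) < Real.logb 2 (4/ε) + 1 := Nat.ceil_lt_add_one hlogbpos.le
    have hlb : Real.logb 2 (4/ε) = (Real.log 4 + L) / Real.log 2 := by
      rw [Real.logb, hLdef, ← Real.log_mul (by norm_num) (by positivity)]
      ring_nf
    have hl2 : (0.6931471803:ℝ) < Real.log 2 := Real.log_two_gt_d9
    have hl4 : Real.log 4 = 2 * Real.log 2 := by
      rw [show (4:ℝ) = 2^2 by norm_num, Real.log_pow]; push_cast; ring
    rw [hlb, div_add' _ _ _ (by linarith), lt_div_iff₀ (by linarith)] at hceil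
    nlinarith
  -- the small point
  have h2K : (4:ℝ)/ε ≤ 2^K := by
    have h := Real.rpow_le_rpow_of_exponent_le (by norm_num : (1:ℝ) ≤ 2) hKge
    rwa [Real.rpow_logb (by positivity) (by norm_num) (by positivity),
      Real.rpow_natCast] at h
  set e : ℝ := (1/2:ℝ)^K with hedef
  have hepos : 0 < e := by positivity
  have heε : e ≤ ε/4 := by
    rw [div_le_iff₀ hε] at h2K
    have hmul : e * 2^K = 1 := by
      rw [hedef, ← mul_pow]; norm_num
    nlinarith [pow_pos (by norm_num : (0:ℝ) < 2) K, mul_pos hε (pow_pos (by norm_num : (0:ℝ) < 2) K)]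
  have he8 : e ≤ 1/8 := by linarith
  clear_value L K e
  -- the three-point set and the map
  refine ⟨{-e, 0, 1}, fun x => |x|, ?_, ?_, ?_, ?_⟩
  · exact (Set.finite_singleton 1).insert 0 |>.insert (-e)
  · have hmem1 : (-e : ℝ) ∉ ({0, 1} : Set ℝ) := by
      simp only [Set.mem_insert_iff, Set.mem_singleton_iff]
      push_neg
      exact ⟨by intro h; linarith, by intro h; linarith⟩
    have hmem2 : (0 : ℝ) ∉ ({1} : Set ℝ) := by simp
    rw [Set.ncard_insert_of_notMem hmem1 ((Set.finite_singleton 1).insert 0),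
      Set.ncard_insert_of_notMem hmem2 (Set.finite_singleton 1), Set.ncard_singleton]
  · -- distortion of f on X is at most 1 + ε
    set lam : ℝ := (1-e)/(1+e) with hlam
    have hlampos : 0 < lam := div_pos (by linarith) (by linarith)
    have k1 : lam ≤ 1 := by rw [hlam, div_le_one (by linarith)]; linarith
    have k2 : 1 ≤ lam * (1+ε) := by
      rw [hlam, div_mul_eq_mul_div, le_div_iff₀ (by linarith)]
      nlinarith
    have k3 : lam * (1+e) = 1 - e := by
      rw [hlam, div_mul_cancel₀ _ (by linarith : (1:ℝ)+e ≠ 0)]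
    clear_value lam
    refine ⟨lam, hlampos, ?_⟩
    have habs : |(-e : ℝ)| = e := by rw [abs_neg, abs_of_pos hepos]
    have A1 : |(-e : ℝ) - 0| = e := by rw [sub_zero, abs_neg, abs_of_pos hepos]
    have A2 : |(-e : ℝ) - 1| = 1 + e := by
      rw [abs_of_nonpos (by linarith)]; ring
    have A3 : |(0:ℝ) - (-e)| = e := by
      rw [zero_sub, neg_neg, abs_of_pos hepos]
    have A4 : |(0:ℝ) - 1| = 1 := by norm_num
    have A5 : |1 - (-e : ℝ)| = 1 + e := by
      rw [sub_neg_eq_add, abs_of_pos (by linarith)]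
    have A6 : |1 - (0:ℝ)| = 1 := by norm_num
    have C1 : |e - (0:ℝ)| = e := by rw [sub_zero, abs_of_pos hepos]
    have C2 : |e - (1:ℝ)| = 1 - e := by rw [abs_of_nonpos (by linarith)]; ring
    have C3 : |(0:ℝ) - e| = e := by rw [zero_sub, abs_neg, abs_of_pos hepos]
    have C5 : |(1:ℝ) - e| = 1 - e := by rw [abs_of_nonneg (by linarith)]
    intro x hx y hy
    simp only [Set.mem_insert_iff, Set.mem_singleton_iff] at hx hy
    rcases hx with rfl | rfl | rfl <;> rcases hy with rfl | rfl | rfl <;>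
      simp only [habs, abs_zero, abs_one, sub_self, A1, A2, A3, A4, A5, A6,
        C1, C2, C3, C5, mul_zero, le_refl, and_self]
    · exact ⟨by nlinarith, by nlinarith⟩
    · exact ⟨by nlinarith, by nlinarith⟩
    · exact ⟨by nlinarith, by nlinarith⟩
    · exact ⟨by nlinarith, by nlinarith⟩
    · exact ⟨by nlinarith, by nlinarith⟩
    · exact ⟨by nlinarith, by nlinarith⟩
  · -- main lower bound
    intro m hm f' hf' D hdist
    obtain ⟨μ, hμ, H⟩ := hdist
    have hm0 : 0 < m := hm
    haveI : NeZero m := ⟨by omega⟩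
    set j₀ : Fin m := ⟨0, hm0⟩ with hj₀
    set v : EuclideanSpace ℝ (Fin m) := EuclideanSpace.single j₀ (1:ℝ) with hv
    have hcond : ∀ j : Fin m, ((j : ℕ) = 0) ↔ (j = j₀) := by
      intro j
      rw [Fin.ext_iff]
    -- values of f' on X
    have hg0 : f' 0 = 0 := by
      ext j
      rw [hf' 0 (by simp) j]
      simp
    have hg1 : f' 1 = v := by
      ext j
      rw [hf' 1 (by simp) j, hv, EuclideanSpace.single_apply]
      by_cases h : (j:ℕ) = 0
      · rw [if_pos h, if_pos ((hcond j).mp h)]; norm_num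
      · rw [if_neg h, if_neg (fun hh => h ((hcond j).mpr hh))]
    have hgm : f' (-e) = e • v := by
      ext j
      rw [hf' (-e) (by simp) j, hv]
      have hsm : (e • EuclideanSpace.single j₀ (1:ℝ)) j
          = e * (if j = j₀ then (1:ℝ) else 0) := by
        rw [PiLp.smul_apply, EuclideanSpace.single_apply, smul_eq_mul]
      rw [hsm]
      by_cases h : (j:ℕ) = 0
      · rw [if_pos h, if_pos ((hcond j).mp h), mul_one]
        simp [abs_of_pos hepos]
      · rw [if_neg h, if_neg (fun hh => h ((hcond j).mpr hh)), mul_zero]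
    have hnv : ‖v‖ = 1 := by rw [hv, EuclideanSpace.norm_single, norm_one]
    -- basic bounds on μ and D
    have h01 := H 0 (Set.mem_univ 0) 1 (Set.mem_univ 1)
    rw [show |(0:ℝ) - 1| = 1 by norm_num, hg0, hg1,
      show (0:EuclideanSpace ℝ (Fin m)) - v = -v from zero_sub v, norm_neg, hnv,
      mul_one, mul_one] at h01
    have hμ1 : μ ≤ 1 := h01.1
    have hμD : 1 ≤ μ * D := h01.2
    have hD1 : 1 ≤ D := by nlinarith
    set β : ℝ := Real.sqrt (D^2 - 1) with hβ
    have hβ0 : 0 ≤ β := Real.sqrt_nonneg _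
    have hβsq : β^2 = D^2 - 1 := Real.sq_sqrt (by nlinarith)
    clear_value β
    have chain := chain_aux f' v μ D β hμ.le hβ0 hβsq hg0 hg1
      (fun x y => (H x (Set.mem_univ x) y (Set.mem_univ y)).1)
      (fun x y => (H x (Set.mem_univ x) y (Set.mem_univ y)).2)
    -- apply the chain at scale K and the folded point
    have hc := chain K
    rw [← hedef] at hc
    have hfold : μ * (2*e) ≤ ‖f' e - e • v‖ := by
      have h := (H e (Set.mem_univ _) (-e) (Set.mem_univ _)).1
      rw [hgm, show |e - (-e)| = 2*e from by
        rw [sub_neg_eq_add, abs_of_pos (by linarith)]; ring] at h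
      exact h
    have h2Kβ : 2 ≤ (K:ℝ) * β := by
      nlinarith [hfold, hc, mul_pos hμ hepos]
    have hKβsq : 4 ≤ (K:ℝ)^2 * (D^2 - 1) := by nlinarith [h2Kβ, hβsq, hβ0]
    exact final_aux K L D (by exact_mod_cast hK1) hK4L hL hD1 hKβsq
end

section
/- There exists ε₀ ∈ (0,1) such that for every ε ∈ (0, ε₀) the following holds. Let X = {0, ε, 1} ⊂ ℝ and let f : X → ℝ be given by f(0) = 0, f(ε) = −ε, f(1) = 1 (a map of distortion (1+ε)/(1−ε)). Then for every m ≥ 1, every outer extension f' : X ∪ {√ε} → ℝ^m of f (i.e., f'(x) = (f(x), 0, …, 0) for x ∈ X) has distortion at least 1 + √ε/2. -/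
/-- **Lower bound for one-point extensions.** For all sufficiently small `ε`, the map sending
`0 ↦ 0`, `ε ↦ -ε`, `1 ↦ 1` is such that every outer extension to the point `√ε` (into any
`ℝᵐ`, `m ≥ 1`) has distortion at least `1 + √ε / 2`. -/
theorem one_point_extension_lower_bound :
    ∃ ε₀ : ℝ, 0 < ε₀ ∧ ε₀ < 1 ∧ ∀ ε : ℝ, 0 < ε → ε < ε₀ →
      ∀ m : ℕ, 1 ≤ m → ∀ f' : ℝ → EuclideanSpace ℝ (Fin m),
        (∀ j : Fin m, f' 0 j = 0) →
        (∀ j : Fin m, f' ε j = if (j : ℕ) = 0 then -ε else 0) →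
        (∀ j : Fin m, f' 1 j = if (j : ℕ) = 0 then 1 else 0) →
        ∀ D : ℝ, HasDistortionAtMost {0, ε, 1, Real.sqrt ε} f' D →
          1 + Real.sqrt ε / 2 ≤ D := by
  refine ⟨1/2, by norm_num, by norm_num, ?_⟩
  intro ε hε hε2 m hm f' h0 hεval h1val D hdist
  obtain ⟨lam, hlam, H⟩ := hdist
  set s := Real.sqrt ε with hsdef
  have hs2 : s ^ 2 = ε := Real.sq_sqrt hε.le
  have hs0 : 0 < s := Real.sqrt_pos.mpr hε
  have hs1 : s < 1 := by
    nlinarith [hs2]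
  have hεs : ε < s := by nlinarith [hs2]
  -- memberships
  have m0 : (0:ℝ) ∈ ({0, ε, 1, s} : Set ℝ) := by simp
  have mε : ε ∈ ({0, ε, 1, s} : Set ℝ) := by simp
  have m1 : (1:ℝ) ∈ ({0, ε, 1, s} : Set ℝ) := by simp
  have ms : s ∈ ({0, ε, 1, s} : Set ℝ) := by simp
  -- values of f'
  have hf0 : f' 0 = 0 := PiLp.ext fun j => by simpa using h0 j
  have hf1 : f' 1 = EuclideanSpace.single (⟨0, hm⟩ : Fin m) (1:ℝ) := by
    ext j
    rw [h1val j, EuclideanSpace.single_apply]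
    by_cases h : (j : ℕ) = 0 <;> simp [h, Fin.ext_iff]
  have hnorm1 : ‖f' 1‖ = 1 := by
    rw [hf1, EuclideanSpace.norm_single]; norm_num
  have hfε : f' ε = (-ε) • f' 1 := by
    ext j
    have : ((-ε) • f' 1) j = (-ε) * f' 1 j := rfl
    rw [hεval j, this, h1val j]
    split_ifs <;> ring
  -- abbreviations
  set a := ‖f' s‖ with ha
  set b := ‖f' s - f' 1‖ with hb
  set c := ‖f' s - f' ε‖ with hc
  set t := (inner ℝ (f' s) (f' 1) : ℝ) with ht
  have hb2 : b ^ 2 = a ^ 2 - 2 * t + 1 := by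
    rw [hb, @norm_sub_sq_real, hnorm1, ha, ht]; ring
  have hc2 : c ^ 2 = a ^ 2 + 2 * ε * t + ε ^ 2 := by
    rw [hc, hfε, @norm_sub_sq_real, inner_smul_right, norm_smul, hnorm1, ha, ht]
    rw [norm_neg, Real.norm_eq_abs, abs_of_pos hε]
    ring
  -- inequalities from the distortion hypothesis
  have hl1 : lam ≤ 1 := by
    have h01 := (H 0 m0 ε mε).1
    rw [hf0, hfε] at h01
    have : ‖(0 : EuclideanSpace ℝ (Fin m)) - (-ε) • f' 1‖ = ε := by
      rw [zero_sub, norm_neg, norm_smul, hnorm1, Real.norm_eq_abs, abs_neg, abs_of_pos hε]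
      ring
    rw [this] at h01
    have habs : |(0:ℝ) - ε| = ε := by rw [abs_sub_comm]; simp [abs_of_pos hε]
    rw [habs] at h01
    nlinarith
  have has : lam * s ≤ a := by
    have := (H s ms 0 m0).1
    rw [hf0, sub_zero, sub_zero, abs_of_pos hs0] at this
    exact this
  have hble : b ≤ lam * D * (1 - s) := by
    have := (H s ms 1 m1).2
    rw [show |s - 1| = 1 - s by rw [abs_sub_comm]; exact abs_of_pos (by linarith)] at this
    exact this
  have hcle : c ≤ lam * D * (s - ε) := by
    have := (H s ms ε mε).2
    rw [show |s - ε| = s - ε from abs_of_pos (by linarith)] at this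
    exact this
  have ha0 : 0 ≤ a := norm_nonneg _
  have hb0 : 0 ≤ b := norm_nonneg _
  have hc0 : 0 ≤ c := norm_nonneg _
  have hD0 : 0 ≤ D := by nlinarith [mul_pos hlam (show (0:ℝ) < 1 - s by linarith)]
  -- square the inequalities
  have e1 : a ^ 2 + 2 * ε * t + ε ^ 2 ≤ lam ^ 2 * D ^ 2 * (s - ε) ^ 2 := by
    calc a ^ 2 + 2 * ε * t + ε ^ 2 = c ^ 2 := hc2.symm
      _ ≤ (lam * D * (s - ε)) ^ 2 := pow_le_pow_left₀ hc0 hcle 2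
      _ = lam ^ 2 * D ^ 2 * (s - ε) ^ 2 := by ring
  have e2 : ε * (a ^ 2 - 2 * t + 1) ≤ ε * (lam ^ 2 * D ^ 2 * (1 - s) ^ 2) := by
    refine mul_le_mul_of_nonneg_left ?_ hε.le
    calc a ^ 2 - 2 * t + 1 = b ^ 2 := hb2.symm
      _ ≤ (lam * D * (1 - s)) ^ 2 := pow_le_pow_left₀ hb0 hble 2
      _ = lam ^ 2 * D ^ 2 * (1 - s) ^ 2 := by ring
  have e3 : lam ^ 2 * ε ≤ a ^ 2 := by
    calc lam ^ 2 * ε = (lam * s) ^ 2 := by rw [← hs2]; ring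
      _ ≤ a ^ 2 := pow_le_pow_left₀ (by positivity) has 2
  have e4 : lam ^ 2 * D ^ 2 * (s - ε) ^ 2 + ε * (lam ^ 2 * D ^ 2 * (1 - s) ^ 2)
      = lam ^ 2 * D ^ 2 * (2 * ε * (1 - s) ^ 2) := by
    linear_combination (lam ^ 2 * D ^ 2 * (1 - ε)) * hs2
  have e3' : (1 + ε) * (lam ^ 2 * ε) ≤ (1 + ε) * a ^ 2 :=
    mul_le_mul_of_nonneg_left e3 (by linarith)
  have e5 : (1 + ε) * (lam ^ 2 * ε) + ε * (1 + ε) ≤ lam ^ 2 * D ^ 2 * (2 * ε * (1 - s) ^ 2) := by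
    linarith [e1, e2, e3', e4]
  have hll : lam ^ 2 ≤ 1 := pow_le_one₀ hlam.le hl1
  have e6' : (2 * ε) * (lam ^ 2 * (1 + ε)) ≤ (2 * ε) * (lam ^ 2 * (D ^ 2 * (1 - s) ^ 2)) := by
    linarith [e5, mul_le_mul_of_nonneg_left hll hε.le,
      mul_le_mul_of_nonneg_left hll (sq_nonneg ε)]
  have e6 : lam ^ 2 * (1 + ε) ≤ lam ^ 2 * (D ^ 2 * (1 - s) ^ 2) :=
    le_of_mul_le_mul_left e6' (by positivity)
  have e7 : (1 + ε) ≤ D ^ 2 * (1 - s) ^ 2 :=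
    le_of_mul_le_mul_left e6 (by positivity)
  -- conclude
  clear_value a b c t
  clear H hf0 hf1 hfε hnorm1 hb2 hc2 has hble hcle e1 e2 e3 e3' e4 e5 e6' e6
  clear m0 mε m1 ms hεval h1val h0 hll hl1 ha0 hb0 hc0 ha hb hc ht a b c t f'
  by_contra hcon
  push_neg at hcon
  have hDsq : D ^ 2 < (1 + s / 2) ^ 2 := by nlinarith
  have hprod : D ^ 2 * (1 - s) ^ 2 ≤ (1 + s / 2) ^ 2 * (1 - s) ^ 2 :=
    mul_le_mul_of_nonneg_right hDsq.le (sq_nonneg _)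
  nlinarith [e7, hprod, hs2, hs0, hs1, mul_pos hs0 hs0, mul_pos (mul_pos hs0 hs0) hs0,
    mul_pos hs0 (show (0:ℝ) < 1 - s by linarith)]
end
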